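/- arXiv:1710.08068 — 6 statements merged into one kernel-verified Lean document; each statement's English description precedes it below -/
import Mathlib

section
/- Let A be a locally noetherian Grothendieck category. Then every spectral object P of A is finitely generated (equivalently, noetherian). -/
/-!
Common set-up: Rosenberg's spectrum of an abelian category.

For objects `X Y` of an abelian category `C`, `X ≺ Y` means that `X` is a subquotient of a
finite direct sum of copies of `Y`; `X ≈ Y` means `X ≺ Y ≺ X`.  A nonzero object `P` is
*spectral* if it is `≈`-equivalent to each of its nonzero subobjects, and the spectrum
`𝔖pec(C)` is the collection of `≈`-equivalence classes `⟨P⟩` of spectral objects.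
`Supp(M) = {⟨P⟩ : P ≺ M}` and `Ass(M) = {⟨P⟩ : some spectral object of class ⟨P⟩ embeds in M}`.
-/

open CategoryTheory CategoryTheory.Limits

attribute [local instance] CategoryTheory.Abelian.hasFiniteBiproducts
attribute [local instance] CategoryTheory.Limits.hasBinaryBiproducts_of_finite_biproducts

universe v u

namespace RosenbergSpec

variable (C : Type u) [Category.{v} C] [Abelian C]

/-- `X ≺ Y` : `X` is a subquotient of a finite direct sum of copies of `Y`. -/
def Prec (X Y : C) : Prop :=
  ∃ n : ℕ, 0 < n ∧ ∃ (S : C) (ι : S ⟶ ⨁ (fun _ : Fin n => Y)) (π : S ⟶ X),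
    Mono ι ∧ Epi π

/-- `X ≈ Y` : mutual subquotient equivalence. -/
def PrecEquiv (X Y : C) : Prop := Prec C X Y ∧ Prec C Y X

/-- A nonzero object is spectral if it is `≈`-equivalent to each of its nonzero subobjects. -/
def IsSpectral (P : C) : Prop :=
  ¬ IsZero P ∧ ∀ (Q : C) (f : Q ⟶ P), Mono f → ¬ IsZero Q → PrecEquiv C Q P

/-- The type of spectral objects of `C`. -/
def SpectralObj := {P : C // IsSpectral C P}

/-- The spectrum `𝔖pec(C)` : equivalence classes `⟨P⟩` of spectral objects. -/
def SpecPoint := Quot (fun P Q : SpectralObj C => PrecEquiv C P.1 Q.1)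

/-- The point `⟨P⟩` of the spectrum attached to a spectral object `P`. -/
def pt (P : SpectralObj C) : SpecPoint C := Quot.mk _ P

/-- `Supp(M) = {⟨P⟩ : P spectral, P ≺ M}`. -/
def supp (M : C) : Set (SpecPoint C) :=
  {x | ∃ P : SpectralObj C, pt C P = x ∧ Prec C P.1 M}

/-- `Ass(M) = {⟨P⟩ : some spectral object of class ⟨P⟩ is a subobject of M}`. -/
def ass (M : C) : Set (SpecPoint C) :=
  {x | ∃ P : SpectralObj C, pt C P = x ∧ ∃ f : P.1 ⟶ M, Mono f}

/-- A subset of the spectrum is specialization closed if together with any point `⟨P⟩`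
it contains all of `Supp(P)`. -/
def SpecializationClosed (S : Set (SpecPoint C)) : Prop :=
  ∀ P : SpectralObj C, pt C P ∈ S → supp C P.1 ⊆ S

/-- Every nonzero object of `C` has an associated point. -/
def HasAssociatedPoints : Prop :=
  ∀ M : C, ¬ IsZero M → (ass C M).Nonempty

/-- A Grothendieck category is locally noetherian if it admits a small generating family
of noetherian objects. -/
def LocallyNoetherian : Prop :=
  ∃ (ι : Type v) (G : ι → C), ObjectProperty.IsSeparating (fun X => X ∈ Set.range G) ∧ ∀ i, IsNoetherianObject (G i)

/-- `0 ⟶ X ⟶ M ⟶ Y ⟶ 0` is a short exact sequence. -/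
def IsShortExact {X M Y : C} (f : X ⟶ M) (g : M ⟶ Y) : Prop :=
  ∃ w : f ≫ g = 0, (ShortComplex.mk f g w).ShortExact

/-- `f : N ⟶ M` exhibits `N` as an essential subobject of `M`. -/
def IsEssential {N M : C} (f : N ⟶ M) : Prop :=
  Mono f ∧ ∀ (K : C) (g : K ⟶ M), Mono g → ¬ IsZero K → ¬ IsZero (pullback f g)

/-- `i : P ⟶ E` exhibits `E` as an injective hull of `P`. -/
def IsInjectiveHull {P E : C} (i : P ⟶ E) : Prop :=
  Injective E ∧ IsEssential C i

/-- A torsion pair `(T, F)` on an abelian category: both classes are replete, all maps from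
`T` to `F` vanish, and every object is an extension of an object of `F` by an object of `T`. -/
structure IsTorsionPair (T F : Set C) : Prop where
  repleteT : ∀ X Y : C, X ∈ T → Nonempty (X ≅ Y) → Y ∈ T
  repleteF : ∀ X Y : C, X ∈ F → Nonempty (X ≅ Y) → Y ∈ F
  hom_zero : ∀ X ∈ T, ∀ Y ∈ F, ∀ f : X ⟶ Y, f = 0
  exists_ses : ∀ M : C, ∃ (X Y : C) (f : X ⟶ M) (g : M ⟶ Y),
    IsShortExact C f g ∧ X ∈ T ∧ Y ∈ F

end RosenbergSpec

section NoethAux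

open CategoryTheory CategoryTheory.Limits CategoryTheory.Subobject

variable {C : Type*} [Category C]

lemma noetherianObject_of_strictMono {X Y : C} (φ : Subobject X → Subobject Y)
    (hφ : StrictMono φ) [IsNoetherianObject Y] : IsNoetherianObject X := by
  refine ⟨⟨?_⟩⟩
  exact Subrelation.wf (fun {a b} h => hφ h)
    (InvImage.wf φ (wellFounded_gt (α := Subobject Y)))

lemma noetherianObject_of_mono [HasPullbacks C] {X Y : C} (f : X ⟶ Y) [Mono f]
    [IsNoetherianObject Y] : IsNoetherianObject X :=
  noetherianObject_of_strictMono (Subobject.map f).obj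
    ((Subobject.map f).monotone.strictMono_of_injective
      (Function.LeftInverse.injective (g := (Subobject.pullback f).obj)
        (fun S => Subobject.pullback_map_self f S)))

lemma pullback_obj_factors_iff [HasPullbacks C] {X Y A : C} (f : X ⟶ Y) (S : Subobject Y)
    (h : A ⟶ X) : ((Subobject.pullback f).obj S).Factors h ↔ S.Factors (h ≫ f) := by
  refine Subobject.ind
    (fun S => (((Subobject.pullback f).obj S).Factors h ↔ S.Factors (h ≫ f))) ?_ S
  intro A' g hg
  have he : (Subobject.pullback f).obj (Subobject.mk g) = Subobject.mk (pullback.snd g f) := rfl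
  rw [he, Subobject.mk_factors_iff, Subobject.mk_factors_iff]
  constructor
  · rintro ⟨u, hu⟩
    change A ⟶ pullback g f at u
    refine ⟨u ≫ pullback.fst g f, ?_⟩
    simp only [MonoOver.mk_arrow] at hu ⊢
    change u ≫ pullback.snd g f = h at hu
    change (u ≫ pullback.fst g f) ≫ g = h ≫ f
    rw [Category.assoc, pullback.condition, ← Category.assoc, hu]
  · rintro ⟨v, hv⟩
    simp only [MonoOver.mk_arrow] at hv ⊢
    exact ⟨pullback.lift v h hv, pullback.lift_snd _ _ _⟩

lemma noetherianObject_of_isZero [Preadditive C] {Z : C} (h : IsZero Z) : IsNoetherianObject Z := by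
  have hsub : ∀ S T : Subobject Z, S ≤ T := by
    intro S T
    refine Subobject.le_of_comm 0 ?_
    rw [zero_comp]
    exact h.eq_of_tgt _ _
  refine ⟨⟨?_⟩⟩
  apply WellFounded.intro
  intro S
  constructor
  intro T hT
  exact absurd hT (hsub T S).not_gt

variable [Abelian C]

lemma factors_of_epi_comp {Y A A' : C} (P : Subobject Y)
    (e : A' ⟶ A) [Epi e] (h : A ⟶ Y) (w : P.Factors (e ≫ h)) : P.Factors h := by
  have hv := P.factorThru_arrow _ w
  have h0 : kernel.ι e ≫ P.factorThru (e ≫ h) w = 0 := by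
    rw [← cancel_mono P.arrow, Category.assoc, hv, zero_comp, ← Category.assoc,
      kernel.condition, zero_comp]
  have hdes : Abelian.epiDesc e _ h0 ≫ P.arrow = h := by
    rw [← cancel_epi e, ← Category.assoc, Abelian.comp_epiDesc, hv]
  rw [← hdes]
  exact Subobject.factors_comp_arrow _

lemma noetherianObject_of_epi {X Y : C} (f : X ⟶ Y) [Epi f] [IsNoetherianObject X] :
    IsNoetherianObject Y := by
  apply noetherianObject_of_strictMono (Subobject.pullback f).obj
  apply (Subobject.pullback f).monotone.strictMono_of_injective
  have hmono : ∀ {S T : Subobject Y},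
      (Subobject.pullback f).obj S ≤ (Subobject.pullback f).obj T → S ≤ T := by
    intro S T hST
    have h1 : ((Subobject.pullback f).obj S).Factors (pullback.snd S.arrow f) := by
      rw [pullback_obj_factors_iff, ← pullback.condition]
      exact Subobject.factors_comp_arrow _
    have h2 := Subobject.factors_of_le _ hST h1
    rw [pullback_obj_factors_iff, ← pullback.condition] at h2
    have h3 : T.Factors S.arrow := factors_of_epi_comp T (pullback.fst S.arrow f) S.arrow h2
    exact Subobject.le_of_comm (T.factorThru _ h3) (Subobject.factorThru_arrow _ _ _)
  intro S T h
  exact le_antisymm (hmono h.le) (hmono h.ge)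

lemma le_of_pullback_image {X Y Z : C} (f : X ⟶ Z) (g : Z ⟶ Y)
    (hker : ∀ {A : C} (d : A ⟶ Z), d ≫ g = 0 → ∃ e : A ⟶ X, e ≫ f = d)
    {S T : Subobject Z} (hST : S ≤ T)
    (h1 : (Subobject.pullback f).obj T ≤ (Subobject.pullback f).obj S)
    (h2 : imageSubobject (T.arrow ≫ g) ≤ imageSubobject (S.arrow ≫ g)) : T ≤ S := by
  have hfacT : (imageSubobject (T.arrow ≫ g)).Factors (T.arrow ≫ g) := by
    have := Subobject.factors_comp_arrow (factorThruImageSubobject (T.arrow ≫ g))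
    rwa [imageSubobject_arrow_comp] at this
  have hfac : (imageSubobject (S.arrow ≫ g)).Factors (T.arrow ≫ g) :=
    Subobject.factors_of_le _ h2 hfacT
  have hfac' : (Subobject.mk (image.ι (S.arrow ≫ g))).Factors (T.arrow ≫ g) := hfac
  rw [Subobject.mk_factors_iff] at hfac'
  obtain ⟨c, hc⟩ := hfac'
  change _ ⟶ image (S.arrow ≫ g) at c
  simp only [MonoOver.mk_arrow] at hc
  change c ≫ image.ι (S.arrow ≫ g) = T.arrow ≫ g at hc
  set u := factorThruImage (S.arrow ≫ g) with hu_def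
  have hu : u ≫ image.ι (S.arrow ≫ g) = S.arrow ≫ g := image.fac _
  have key : pullback.fst u c ≫ (u ≫ image.ι (S.arrow ≫ g)) = pullback.snd u c ≫ T.arrow ≫ g := by
    rw [← Category.assoc, pullback.condition, Category.assoc, hc]
  rw [hu] at key
  set d : pullback u c ⟶ Z := pullback.snd u c ≫ T.arrow - pullback.fst u c ≫ S.arrow
    with hd_def
  have hd : d ≫ g = 0 := by
    rw [hd_def, Preadditive.sub_comp, Category.assoc, Category.assoc, key, sub_self]
  obtain ⟨w0, hw0⟩ := hker d hd
  have hdT : T.Factors d := by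
    have heq : d = (pullback.snd u c - pullback.fst u c ≫ Subobject.ofLE S T hST) ≫ T.arrow := by
      rw [Preadditive.sub_comp, Category.assoc, Subobject.ofLE_arrow, hd_def]
    rw [heq]
    exact Subobject.factors_comp_arrow _
  have hdS : S.Factors d := by
    rw [← hw0] at hdT ⊢
    rw [← pullback_obj_factors_iff] at hdT
    rw [← pullback_obj_factors_iff]
    exact Subobject.factors_of_le _ h1 hdT
  have hsnd : S.Factors (pullback.snd u c ≫ T.arrow) := by
    have heq : pullback.snd u c ≫ T.arrow = (S.factorThru d hdS + pullback.fst u c) ≫ S.arrow := by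
      rw [Preadditive.add_comp, Subobject.factorThru_arrow, hd_def]
      abel
    rw [heq]
    exact Subobject.factors_comp_arrow _
  have hT : S.Factors T.arrow := factors_of_epi_comp S (pullback.snd u c) T.arrow hsnd
  exact Subobject.le_of_comm (S.factorThru T.arrow hT) (Subobject.factorThru_arrow _ _ _)

lemma noetherianObject_of_ker_im {X Y Z : C} (f : X ⟶ Z) (g : Z ⟶ Y)
    (hker : ∀ {A : C} (d : A ⟶ Z), d ≫ g = 0 → ∃ e : A ⟶ X, e ≫ f = d)
    [IsNoetherianObject X] [IsNoetherianObject Y] : IsNoetherianObject Z := by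
  refine ⟨⟨?_⟩⟩
  have wflex := (wellFounded_gt (α := Subobject X)).prod_lex
    (wellFounded_gt (α := Subobject Y))
  let φ : Subobject Z → Subobject X × Subobject Y :=
    fun S => ((Subobject.pullback f).obj S, imageSubobject (S.arrow ≫ g))
  have mono1 : ∀ {S T : Subobject Z}, S ≤ T →
      (Subobject.pullback f).obj S ≤ (Subobject.pullback f).obj T :=
    fun h => (Subobject.pullback f).monotone h
  have mono2 : ∀ {S T : Subobject Z}, S ≤ T →
      imageSubobject (S.arrow ≫ g) ≤ imageSubobject (T.arrow ≫ g) := by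
    intro S T h
    have heq : S.arrow ≫ g = Subobject.ofLE S T h ≫ (T.arrow ≫ g) := by
      rw [← Category.assoc, Subobject.ofLE_arrow]
    rw [heq]
    exact imageSubobject_comp_le _ _
  refine Subrelation.wf ?_ (InvImage.wf φ wflex)
  intro S T h
  rcases eq_or_lt_of_le (mono1 (le_of_lt h)) with heq1 | hlt1
  · rcases eq_or_lt_of_le (mono2 (le_of_lt h)) with heq2 | hlt2
    · exact absurd
        (le_of_pullback_image f g hker (le_of_lt h) (le_of_eq heq1.symm) (le_of_eq heq2.symm))
        h.not_ge
    · show Prod.Lex _ _ (φ S) (φ T)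
      dsimp only [φ]
      rw [← heq1]
      exact Prod.Lex.right _ hlt2
  · exact Prod.Lex.left _ _ hlt1

lemma noetherianObject_of_biproduct_fin [HasFiniteBiproducts C] (Q : C) [IsNoetherianObject Q] :
    ∀ n : ℕ, IsNoetherianObject (⨁ (fun _ : Fin n => Q))
  | 0 => noetherianObject_of_isZero (by
      rw [IsZero.iff_id_eq_zero, ← biproduct.total]
      simp)
  | (n+1) => by
      haveI := noetherianObject_of_biproduct_fin Q n
      apply noetherianObject_of_ker_im (biproduct.ι (fun _ : Fin (n+1) => Q) 0)
        (biproduct.lift (fun j : Fin n => biproduct.π (fun _ : Fin (n+1) => Q) j.succ))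
      intro A d hd
      refine ⟨d ≫ biproduct.π _ 0, ?_⟩
      have hj : ∀ j : Fin n, d ≫ biproduct.π (fun _ : Fin (n+1) => Q) j.succ = 0 := by
        intro j
        have := congrArg (· ≫ biproduct.π (fun _ : Fin n => Q) j) hd
        simpa using this
      have h1 : d = ∑ j : Fin (n+1), d ≫ (biproduct.π (fun _ : Fin (n+1) => Q) j ≫
          biproduct.ι (fun _ : Fin (n+1) => Q) j) := by
        rw [← Preadditive.comp_sum, biproduct.total, Category.comp_id]
      rw [Fin.sum_univ_succ] at h1
      have h2 : ∀ j : Fin n, d ≫ (biproduct.π (fun _ : Fin (n+1) => Q) j.succ ≫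
          biproduct.ι (fun _ : Fin (n+1) => Q) j.succ) = 0 := by
        intro j
        rw [← Category.assoc, hj j, zero_comp]
      rw [Finset.sum_eq_zero (fun j _ => h2 j), add_zero] at h1
      rw [Category.assoc]
      exact h1.symm

end NoethAux

namespace RosenbergSpec

/-- Let `A` be a locally noetherian Grothendieck category.  Then every
spectral object `P` of `A` is finitely generated (equivalently, noetherian). -/
theorem spectral_implies_noetherian
    (A : Type u) [Category.{v} A] [Abelian A] [HasColimits A] [AB5 A]
    (hln : LocallyNoetherian A)
    (P : A) (hP : IsSpectral A P) :
    IsNoetherianObject P := by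
  obtain ⟨κ, G, hsep, hnoe⟩ := hln
  obtain ⟨hPnz, hspec⟩ := hP
  have hex : ∃ (i : κ) (h : G i ⟶ P), h ≠ 0 := by
    by_contra hc
    push_neg at hc
    apply hPnz
    rw [IsZero.iff_id_eq_zero]
    refine hsep (𝟙 P) 0 ?_
    rintro G' ⟨i, rfl⟩ h
    rw [hc i h]
    simp
  obtain ⟨i, h, hne⟩ := hex
  haveI := hnoe i
  haveI : IsNoetherianObject (image h) := noetherianObject_of_epi (factorThruImage h)
  have hQnz : ¬ IsZero (image h) := by
    intro hz
    apply hne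
    rw [← image.fac h, hz.eq_of_src (image.ι h) 0, comp_zero]
  obtain ⟨_, hPQ⟩ := hspec (image h) (image.ι h) inferInstance hQnz
  obtain ⟨n, hn, S, ι', π', hmono, hepi⟩ := hPQ
  haveI := hmono
  haveI := hepi
  haveI : IsNoetherianObject (⨁ (fun _ : Fin n => image h)) :=
    noetherianObject_of_biproduct_fin _ n
  haveI : IsNoetherianObject S := noetherianObject_of_mono ι'
  exact noetherianObject_of_epi π'

end RosenbergSpec
end

section
/- Let A be a locally noetherian Grothendieck category in which every nonzero object has an associated point. Let C be a full subcategory of A_fg that contains 0 and is closed under extensions. If M is a finitely generated object of A such that P belongs to C for every spectral object P with ⟨P⟩ ∈ Supp(M), then M belongs to C. -/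
/-!
Common set-up: Rosenberg's spectrum of an abelian category.

For objects `X Y` of an abelian category `C`, `X ≺ Y` means that `X` is a subquotient of a
finite direct sum of copies of `Y`; `X ≈ Y` means `X ≺ Y ≺ X`.  A nonzero object `P` is
*spectral* if it is `≈`-equivalent to each of its nonzero subobjects, and the spectrum
`𝔖pec(C)` is the collection of `≈`-equivalence classes `⟨P⟩` of spectral objects.
`Supp(M) = {⟨P⟩ : P ≺ M}` and `Ass(M) = {⟨P⟩ : some spectral object of class ⟨P⟩ embeds in M}`.
-/

open CategoryTheory CategoryTheory.Limits

attribute [local instance] CategoryTheory.Abelian.hasFiniteBiproducts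
attribute [local instance] CategoryTheory.Limits.hasBinaryBiproducts_of_finite_biproducts

universe v u

namespace RosenbergSpec

/-- Let `A` be a locally noetherian Grothendieck category in which every
nonzero object has an associated point.  Let `𝒞` be a full subcategory of `A_fg` that
contains `0` and is closed under extensions.  If `M` is a finitely generated object of `A`
such that `P ∈ 𝒞` for every spectral object `P` with `⟨P⟩ ∈ Supp(M)`, then `M ∈ 𝒞`. -/
theorem mem_of_spectral_support_subset
    (A : Type u) [Category.{v} A] [Abelian A] [HasColimits A] [AB5 A]
    (hln : LocallyNoetherian A) (hass : HasAssociatedPoints A)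
    (𝒞 : Set A)
    (hfg : ∀ X ∈ 𝒞, IsNoetherianObject X)
    (hzero : ∀ Z : A, IsZero Z → Z ∈ 𝒞)
    (hext : ∀ (X M Y : A) (f : X ⟶ M) (g : M ⟶ Y),
      IsShortExact A f g → X ∈ 𝒞 → Y ∈ 𝒞 → M ∈ 𝒞)
    (M : A) (hM : IsNoetherianObject M)
    (hsupp : ∀ (P : A) (hP : IsSpectral A P), pt A ⟨P, hP⟩ ∈ supp A M → P ∈ 𝒞) :
    M ∈ 𝒞 := by
  classical
  -- repleteness of 𝒞
  have replete : ∀ X Y : A, X ∈ 𝒞 → (X ≅ Y) → Y ∈ 𝒞 := by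
    intro X Y hX e
    obtain ⟨Z, hZ⟩ := HasZeroObject.zero (C := A)
    refine hext X Y Z e.hom 0 ⟨comp_zero, ?_⟩ hX (hzero Z hZ)
    have hepi : Epi (0 : Y ⟶ Z) := by
      constructor
      intro W g h _
      exact hZ.eq_of_src g h
    exact { exact := (ShortComplex.exact_iff_epi _ rfl).2 inferInstance
            mono_f := inferInstance
            epi_g := hepi }
  -- the set of subobjects of M lying in 𝒞
  have hbot : (((⊥ : Subobject M) : A)) ∈ 𝒞 :=
    hzero _ (IsZero.of_iso (isZero_zero A) Subobject.botCoeIsoZero)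
  obtain ⟨N, hNs, hNmax⟩ :=
    (wellFounded_gt (α := Subobject M)).has_min
      {N : Subobject M | ((N : A)) ∈ 𝒞} ⟨⊥, hbot⟩
  -- show N = ⊤, i.e. N.arrow is an isomorphism
  by_cases htop : N = ⊤
  · haveI : IsIso N.arrow := by
      rw [Subobject.isIso_arrow_iff_eq_top]; exact htop
    exact replete _ _ hNs (asIso N.arrow)
  exfalso
  set π : M ⟶ cokernel N.arrow := cokernel.π N.arrow with hπ
  have hQ : ¬ IsZero (cokernel N.arrow) := by
    intro h
    haveI : Epi N.arrow := Preadditive.epi_of_cokernel_iso_zero h.isoZero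
    haveI : IsIso N.arrow := isIso_of_mono_of_epi N.arrow
    exact htop (Subobject.eq_top_of_isIso_arrow N)
  obtain ⟨x, P, -, f, hf⟩ := hass _ hQ
  haveI : Mono f := hf
  -- P.1 is a subquotient of M
  set S : A := pullback f π with hS
  set fst : S ⟶ P.1 := pullback.fst f π with hfst
  set snd : S ⟶ M := pullback.snd f π with hsnd
  haveI : Epi fst := by rw [hfst]; infer_instance
  haveI : Mono snd := by rw [hsnd]; infer_instance
  have hprec : Prec A P.1 M := by
    refine ⟨1, one_pos, S, snd ≫ biproduct.ι (fun _ : Fin 1 => M) 0, fst, ?_, ?_⟩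
    · infer_instance
    · infer_instance
  have hP𝒞 : P.1 ∈ 𝒞 := hsupp P.1 P.2 ⟨P, rfl, hprec⟩
  -- the pullback S is an extension of P.1 by N
  have hcond : (0 : (N : A) ⟶ P.1) ≫ f = N.arrow ≫ π := by
    simp [hπ]
  set i : ((N : Subobject M) : A) ⟶ S := pullback.lift 0 N.arrow hcond with hi
  have hisnd : i ≫ snd = N.arrow := pullback.lift_snd _ _ hcond
  have hifst : i ≫ fst = 0 := pullback.lift_fst _ _ hcond
  haveI : Mono i := by
    have : Mono (i ≫ snd) := by rw [hisnd]; infer_instance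
    exact mono_of_mono i snd
  -- N.arrow is a kernel of π
  have hker : IsLimit (KernelFork.ofι N.arrow (cokernel.condition N.arrow)) :=
    Abelian.monoIsKernelOfCokernel (CokernelCofork.ofπ _ (cokernel.condition N.arrow)) (cokernelIsCokernel N.arrow)
  -- i is a kernel of fst
  have hlim : IsLimit (KernelFork.ofι i hifst) := by
    refine KernelFork.IsLimit.ofι' i hifst ?_
    intro W k hk
    have hkc : (k ≫ snd) ≫ π = 0 := by
      have := pullback.condition (f := f) (g := π)
      calc (k ≫ snd) ≫ π = k ≫ snd ≫ π := by rw [Category.assoc]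
        _ = k ≫ fst ≫ f := by rw [← this]
        _ = (k ≫ fst) ≫ f := by rw [Category.assoc]
        _ = 0 := by rw [hk, zero_comp]
    set l : W ⟶ (N : A) := hker.lift (KernelFork.ofι (k ≫ snd) hkc) with hl
    have hlfac : l ≫ N.arrow = k ≫ snd := hker.fac (KernelFork.ofι (k ≫ snd) hkc) WalkingParallelPair.zero
    refine ⟨l, ?_⟩
    apply pullback.hom_ext
    · rw [Category.assoc]
      show l ≫ i ≫ fst = k ≫ fst
      rw [hifst, comp_zero, hk]
    · rw [Category.assoc]
      show l ≫ i ≫ snd = k ≫ snd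
      rw [hisnd, hlfac]
  have hSE : IsShortExact A i fst :=
    ⟨hifst, { exact := ShortComplex.exact_of_f_is_kernel _ hlim
              mono_f := inferInstance
              epi_g := inferInstance }⟩
  have hS𝒞 : S ∈ 𝒞 := hext _ S P.1 i fst hSE hNs hP𝒞
  -- the subobject given by snd strictly dominates N, contradiction
  have hmem : Subobject.mk snd ∈ {N : Subobject M | ((N : A)) ∈ 𝒞} :=
    replete S _ hS𝒞 (Subobject.underlyingIso snd).symm
  have hle : N ≤ Subobject.mk snd := Subobject.le_mk_of_comm i hisnd
  have hne : N ≠ Subobject.mk snd := by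
    intro h
    have hle' : Subobject.mk snd ≤ N := le_of_eq h.symm
    have hfac : Subobject.ofMkLE snd N hle' ≫ N.arrow = snd := Subobject.ofMkLE_arrow hle'
    have hz : snd ≫ π = 0 := by
      rw [← hfac, Category.assoc]
      simp [hπ]
    have hz' : fst ≫ f = 0 := by
      rw [pullback.condition (f := f) (g := π)]
      exact hz
    have hf0 : f = 0 := by
      rw [← cancel_epi fst, hz', comp_zero]
    exact P.2.1 (IsZero.of_mono_eq_zero f hf0)
  exact hNmax (Subobject.mk snd) hmem (lt_of_le_of_ne hle hne)

end RosenbergSpec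
end

section
/- Let R be a commutative noetherian ring and let N be a spectral object in the category of R-modules. If M is a finitely generated R-module such that N ≺ M (i.e., ⟨N⟩ ∈ Supp(M)), then there exists a nonzero R-linear map from M to N. -/
/-!
Common set-up: Rosenberg's spectrum of an abelian category.

For objects `X Y` of an abelian category `C`, `X ≺ Y` means that `X` is a subquotient of a
finite direct sum of copies of `Y`; `X ≈ Y` means `X ≺ Y ≺ X`.  A nonzero object `P` is
*spectral* if it is `≈`-equivalent to each of its nonzero subobjects, and the spectrum
`𝔖pec(C)` is the collection of `≈`-equivalence classes `⟨P⟩` of spectral objects.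
`Supp(M) = {⟨P⟩ : P ≺ M}` and `Ass(M) = {⟨P⟩ : some spectral object of class ⟨P⟩ embeds in M}`.
-/

open CategoryTheory CategoryTheory.Limits

attribute [local instance] CategoryTheory.Abelian.hasFiniteBiproducts
attribute [local instance] CategoryTheory.Limits.hasBinaryBiproducts_of_finite_biproducts

universe v u

namespace RosenbergSpec

set_option maxHeartbeats 1000000
set_option synthInstance.maxHeartbeats 400000

open LocalizedModule in
theorem exists_nonzero_hom_to_quotient_prime
    {R : Type u} [CommRing R] (M : Type u) [AddCommGroup M] [Module R M]
    [Module.Finite R M] (q : Ideal R) [hq : q.IsPrime]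
    (hann : Module.annihilator R M ≤ q) :
    ∃ φ : M →ₗ[R] R ⧸ q, φ ≠ 0 := by
  classical
  -- Step 1 : a non-torsion element of `M ⧸ qM` over `R ⧸ q`
  have main1 : ∃ v : M ⧸ (q • ⊤ : Submodule R M),
      LocalizedModule.mkLinearMap (nonZeroDivisors (R ⧸ q))
        (M ⧸ (q • ⊤ : Submodule R M)) v ≠ 0 := by
    by_contra hcon
    push_neg at hcon
    have htor : ∀ v : M ⧸ (q • ⊤ : Submodule R M),
        ∃ d ∈ nonZeroDivisors (R ⧸ q), d • v = 0 := by
      intro v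
      exact (LocalizedModule.mem_ker_mkLinearMap_iff
        (S := nonZeroDivisors (R ⧸ q))).mp (by rw [LinearMap.mem_ker]; exact hcon v)
    choose dfun hd1 hd2 using htor
    obtain ⟨s, hs⟩ : (⊤ : Submodule R M).FG := Module.Finite.fg_top
    set mkV : M →ₗ[R] (M ⧸ (q • ⊤ : Submodule R M)) := Submodule.mkQ _ with hmkV
    set d : R ⧸ q := ∏ m ∈ s, dfun (mkV m) with hd
    have hdmem : d ∈ nonZeroDivisors (R ⧸ q) := Submonoid.prod_mem _ fun m _ => hd1 _
    have hkill : ∀ m : M, d • (mkV m) = 0 := by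
      intro m
      have hm : m ∈ Submodule.span R (s : Set M) := by rw [hs]; trivial
      induction hm using Submodule.span_induction with
      | mem x hx =>
        have hfac : (∏ m' ∈ s.erase x, dfun (mkV m')) * dfun (mkV x) = d := by
          rw [hd, mul_comm]; exact Finset.mul_prod_erase s _ hx
        rw [← hfac, mul_smul, hd2 (mkV x), smul_zero]
      | zero => rw [map_zero, smul_zero]
      | add y z _ _ hy hz => rw [map_add, smul_add, hy, hz, add_zero]
      | smul r y _ hy =>
        rw [map_smul, ← algebraMap_smul (R ⧸ q) r (mkV y), smul_smul, mul_comm,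
          ← smul_smul, hy, smul_zero]
    have hd0 : d ≠ 0 := mem_nonZeroDivisors_iff_ne_zero.mp hdmem
    obtain ⟨a, ha⟩ := Ideal.Quotient.mk_surjective d
    have haq : a ∉ q := by
      intro hmem
      exact hd0 (by rw [← ha, Ideal.Quotient.eq_zero_iff_mem]; exact hmem)
    have hsm : ∀ m : M, a • m ∈ (q • ⊤ : Submodule R M) := by
      intro m
      have h1 : d • (mkV m) = 0 := hkill m
      rw [← ha] at h1
      have h2 : (Ideal.Quotient.mk q a) • (mkV m)
          = Submodule.Quotient.mk (p := (q • ⊤ : Submodule R M)) (a • m) :=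
        Module.Quotient.mk_smul_mk M q a m
      rw [h2] at h1
      exact (Submodule.Quotient.mk_eq_zero _).mp h1
    obtain ⟨p, hmonic, -, hcoeff, heval⟩ :=
      LinearMap.exists_monic_and_coeff_mem_pow_and_aeval_eq_zero_of_range_le_smul R
        (a • (LinearMap.id : M →ₗ[R] M)) q (by rintro x ⟨m, rfl⟩; exact hsm m)
    have h1 : Polynomial.aeval (algebraMap R (Module.End R M) a) p = 0 := by
      rwa [Module.algebraMap_end_eq_smul_id]
    rw [Polynomial.aeval_algebraMap_apply_eq_algebraMap_eval] at h1
    have h2 : Polynomial.eval a p ∈ Module.annihilator R M := by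
      rw [Module.mem_annihilator]
      intro m
      have h3 := congrFun (congrArg DFunLike.coe h1) m
      simpa [Module.algebraMap_end_apply] using h3
    have h3 : Polynomial.eval a p ∈ q := hann h2
    have h4 : a ^ p.natDegree ∈ q := by
      have hev : Polynomial.eval a p =
          (∑ i ∈ Finset.range p.natDegree, p.coeff i * a ^ i) + a ^ p.natDegree := by
        rw [Polynomial.eval_eq_sum_range, Finset.sum_range_succ, hmonic.coeff_natDegree, one_mul]
      have hsum : (∑ i ∈ Finset.range p.natDegree, p.coeff i * a ^ i) ∈ q :=
        Ideal.sum_mem _ fun i hi => Ideal.mul_mem_right _ _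
          (Ideal.pow_le_self (Nat.sub_ne_zero_of_lt (Finset.mem_range.mp hi)) (hcoeff i))
      have heq : a ^ p.natDegree =
          Polynomial.eval a p - ∑ i ∈ Finset.range p.natDegree, p.coeff i * a ^ i := by
        rw [hev]; ring
      rw [heq]; exact Ideal.sub_mem _ h3 hsum
    exact haq (hq.mem_of_pow_mem p.natDegree h4)
  obtain ⟨v, hv⟩ := main1
  -- Step 2 : a functional on the localized module
  obtain ⟨ℓ, hℓ⟩ : ∃ ℓ : Module.Dual (FractionRing (R ⧸ q))
      (LocalizedModule (nonZeroDivisors (R ⧸ q)) (M ⧸ (q • ⊤ : Submodule R M))),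
      ℓ (LocalizedModule.mkLinearMap (nonZeroDivisors (R ⧸ q)) _ v) ≠ 0 := by
    by_contra hcon
    push_neg at hcon
    exact hv ((Module.forall_dual_apply_eq_zero_iff (FractionRing (R ⧸ q)) _).mp hcon)
  set φ₀ : (M ⧸ (q • ⊤ : Submodule R M)) →ₗ[R ⧸ q] FractionRing (R ⧸ q) :=
    (ℓ.restrictScalars (R ⧸ q)).comp
      (LocalizedModule.mkLinearMap (nonZeroDivisors (R ⧸ q)) _) with hφ₀def
  have hφ₀ : φ₀ v ≠ 0 := hℓ
  -- Step 3 : clear denominators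
  haveI : Module.Finite R (M ⧸ (q • ⊤ : Submodule R M)) := Module.Finite.quotient R _
  obtain ⟨t, ht⟩ : (⊤ : Submodule R (M ⧸ (q • ⊤ : Submodule R M))).FG := Module.Finite.fg_top
  have htD : Submodule.span (R ⧸ q) (t : Set (M ⧸ (q • ⊤ : Submodule R M))) = ⊤ := by
    rw [eq_top_iff]
    rintro x -
    have hx : x ∈ Submodule.span R (t : Set (M ⧸ (q • ⊤ : Submodule R M))) := by
      rw [ht]; trivial
    induction hx using Submodule.span_induction with
    | mem y hy => exact Submodule.subset_span hy
    | zero => exact Submodule.zero_mem _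
    | add y z _ _ hy hz => exact Submodule.add_mem _ hy hz
    | smul r y _ hy =>
      rw [← algebraMap_smul (R ⧸ q) r y]; exact Submodule.smul_mem _ _ hy
  obtain ⟨b, hb⟩ := IsLocalization.exist_integer_multiples_of_finset
    (nonZeroDivisors (R ⧸ q)) (t.image φ₀)
  set ψ : (M ⧸ (q • ⊤ : Submodule R M)) →ₗ[R ⧸ q] FractionRing (R ⧸ q) :=
    (b : R ⧸ q) • φ₀ with hψdef
  have hrange : ∀ x, ψ x ∈ LinearMap.range
      (Algebra.linearMap (R ⧸ q) (FractionRing (R ⧸ q))) := by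
    intro x
    have hx : x ∈ Submodule.span (R ⧸ q) (t : Set (M ⧸ (q • ⊤ : Submodule R M))) := by rw [htD]; trivial
    have hle : Submodule.span (R ⧸ q) (t : Set (M ⧸ (q • ⊤ : Submodule R M))) ≤
        (LinearMap.range (Algebra.linearMap (R ⧸ q) (FractionRing (R ⧸ q)))).comap ψ := by
      rw [Submodule.span_le]
      intro u hu
      obtain ⟨c, hc⟩ := hb (φ₀ u) (Finset.mem_image_of_mem φ₀ hu)
      exact ⟨c, hc⟩
    exact hle hx
  have hψv : ψ v ≠ 0 := by
    have hb0 : ((b : R ⧸ q)) ≠ 0 := mem_nonZeroDivisors_iff_ne_zero.mp b.2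
    rw [hψdef, LinearMap.smul_apply, Algebra.smul_def]
    exact mul_ne_zero (by rwa [Ne, IsFractionRing.to_map_eq_zero_iff]) hφ₀
  set e := LinearEquiv.ofInjective
    (Algebra.linearMap (R ⧸ q) (FractionRing (R ⧸ q)))
    (IsFractionRing.injective (R ⧸ q) (FractionRing (R ⧸ q))) with hedef
  set χ : (M ⧸ (q • ⊤ : Submodule R M)) →ₗ[R ⧸ q] (R ⧸ q) :=
    e.symm.toLinearMap.comp (ψ.codRestrict _ hrange) with hχdef
  have hχv : χ v ≠ 0 := by
    intro h0
    apply hψv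
    have h0' : e.symm (ψ.codRestrict _ hrange v) = 0 := by
      rw [hχdef] at h0
      simpa using h0
    have h1 := (LinearEquiv.map_eq_zero_iff e.symm).mp h0'
    exact congrArg Subtype.val h1
  refine ⟨(χ.restrictScalars R).comp (Submodule.mkQ (q • ⊤ : Submodule R M)), ?_⟩
  intro h0
  apply hχv
  obtain ⟨m, hm⟩ := Submodule.Quotient.mk_surjective (q • ⊤ : Submodule R M) v
  have h1 := congrFun (congrArg DFunLike.coe h0) m
  simp only [LinearMap.comp_apply, Submodule.mkQ_apply, LinearMap.zero_apply,
    LinearMap.coe_restrictScalars] at h1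
  rw [← hm]
  exact h1

theorem annihilator_le_of_prec {R : Type u} [CommRing R] {X Y : ModuleCat.{u} R}
    (h : Prec (ModuleCat.{u} R) X Y) :
    Module.annihilator R Y ≤ Module.annihilator R X := by
  obtain ⟨n, -, S, ι, π, hι, hπ⟩ := h
  intro r hr
  rw [Module.mem_annihilator] at hr ⊢
  have hY : r • 𝟙 Y = 0 := ModuleCat.hom_ext (LinearMap.ext fun y => hr y)
  have hB : r • 𝟙 (⨁ fun _ : Fin n => Y) = 0 := by
    apply biproduct.hom_ext'
    intro j
    rw [Linear.comp_smul, Category.comp_id, comp_zero,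
      ← Category.id_comp (biproduct.ι (fun _ : Fin n => Y) j), ← Linear.smul_comp, hY, zero_comp]
  haveI := hι
  haveI := hπ
  have hS : r • 𝟙 S = 0 := by
    rw [← cancel_mono ι, Linear.smul_comp, Category.id_comp, zero_comp,
      ← Category.comp_id ι, ← Linear.comp_smul, hB, comp_zero]
  have hX : r • 𝟙 X = 0 := by
    rw [← cancel_epi π, Linear.comp_smul, Category.comp_id, comp_zero,
      ← Category.id_comp π, ← Linear.smul_comp, hS, zero_comp]
  intro x
  have hx := LinearMap.congr_fun (congrArg ModuleCat.Hom.hom hX) x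
  exact hx

/-- Let `R` be a commutative noetherian ring and let `N` be a spectral
object in the category of `R`-modules.  If `M` is a finitely generated `R`-module with
`N ≺ M` (i.e. `⟨N⟩ ∈ Supp(M)`), then there is a nonzero `R`-linear map `M ⟶ N`. -/
theorem exists_nonzero_hom_of_spectral_prec
    (R : Type u) [CommRing R] [IsNoetherianRing R]
    (N M : ModuleCat.{u} R)
    (hN : IsSpectral (ModuleCat.{u} R) N)
    (hM : Module.Finite R M)
    (h : Prec (ModuleCat.{u} R) N M) :
    ∃ f : M ⟶ N, f ≠ 0 := by
  haveI : Module.Finite R ↑M := hM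
  haveI : Nontrivial ↑N := by
    by_contra hc
    rw [not_nontrivial_iff_subsingleton] at hc
    exact hN.1 (ModuleCat.isZero_of_subsingleton N)
  obtain ⟨q, hq0⟩ := associatedPrimes.nonempty R ↑N
  obtain ⟨hqp, y, hy⟩ := isAssociatedPrime_iff.mp hq0
  haveI := hqp
  have hann : Module.annihilator R ↑M ≤ q := by
    refine le_trans (annihilator_le_of_prec h) ?_
    intro r hr
    rw [hy, Submodule.mem_colon_singleton, Submodule.mem_bot]
    exact Module.mem_annihilator.mp hr y
  obtain ⟨φ, hφ⟩ := exists_nonzero_hom_to_quotient_prime (↑M : Type u) q hann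
  have hker : q ≤ LinearMap.ker (LinearMap.toSpanSingleton R ↑N y) := by
    intro r hr
    rw [LinearMap.mem_ker, LinearMap.toSpanSingleton_apply]
    rw [hy, Submodule.mem_colon_singleton, Submodule.mem_bot] at hr
    exact hr
  set e : (R ⧸ q) →ₗ[R] ↑N :=
    Submodule.liftQ q (LinearMap.toSpanSingleton R ↑N y) hker with hedef
  have he : Function.Injective e := by
    rw [← LinearMap.ker_eq_bot, hedef, Submodule.ker_liftQ_eq_bot]
    intro r hr
    rw [LinearMap.mem_ker, LinearMap.toSpanSingleton_apply] at hr
    rw [hy, Submodule.mem_colon_singleton, Submodule.mem_bot]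
    exact hr
  refine ⟨ModuleCat.ofHom (e.comp φ), ?_⟩
  intro h0
  apply hφ
  apply LinearMap.ext
  intro m
  have h1 : e (φ m) = 0 := by
    have := congrArg (fun f : M ⟶ N => f.hom m) h0
    simpa using this
  rw [LinearMap.zero_apply]
  exact he (by rw [h1, map_zero])


end RosenbergSpec
end

section
/- Let R be a commutative noetherian ring and let M be a finitely generated R-module. Then for every nonzero submodule N of M there exists a nonzero R-linear map from M to N. -/
/-- Let `R` be a commutative noetherian ring and `M` a finitely generated
`R`-module.  Then for every nonzero submodule `N` of `M` there exists a nonzero `R`-linear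
map from `M` to `N`. -/
theorem exists_nonzero_hom_to_nonzero_submodule
    (R : Type*) [CommRing R] [IsNoetherianRing R]
    (M : Type*) [AddCommGroup M] [Module R M] [Module.Finite R M]
    (N : Submodule R M) (hN : N ≠ ⊥) :
    ∃ f : M →ₗ[R] N, f ≠ 0 := by
  by_contra hcon
  push_neg at hcon
  -- pick an associated prime `p = ann(x)` of `N`
  haveI : Nontrivial N := Submodule.nontrivial_iff_ne_bot.mpr hN
  obtain ⟨p, hpprime, x, hx⟩ := (associatedPrimes.nonempty R N).imp fun _ hp => isAssociatedPrime_iff.mp hp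
  haveI := hpprime
  set S := p.primeCompl with hS
  let Rp := Localization.AtPrime p
  let Mp := LocalizedModule S M
  let Np := LocalizedModule S N
  have hxr : ∀ r : R, r • x = 0 ↔ r ∈ p := by
    intro r
    rw [hx, Submodule.mem_colon_singleton, Submodule.mem_bot]
  -- the element `x/1` of `Np` is nonzero
  set xp : Np := LocalizedModule.mk x 1 with hxpdef
  have hxp : xp ≠ 0 := by
    intro h
    rw [hxpdef, show (0 : Np) = LocalizedModule.mk 0 1 from (LocalizedModule.zero_mk 1).symm,
      LocalizedModule.mk_eq] at h
    obtain ⟨u, hu⟩ := h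
    simp only [one_smul, smul_zero] at hu
    exact u.2 ((hxr u.1).mp hu)
  -- `Mp` is nontrivial since the image of `x` in `Mp` is nonzero
  have hMp : Nontrivial Mp := by
    refine ⟨LocalizedModule.mk (x : M) 1, 0, fun h => ?_⟩
    rw [show (0 : Mp) = LocalizedModule.mk 0 1 from (LocalizedModule.zero_mk 1).symm,
      LocalizedModule.mk_eq] at h
    obtain ⟨u, hu⟩ := h
    simp only [one_smul, smul_zero] at hu
    have : u.1 • x = 0 := Subtype.ext (by simpa [Submonoid.smul_def] using hu)
    exact u.2 ((hxr u.1).mp this)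
  -- `Mp` is a finite `Rp`-module, so its submodule lattice is coatomic
  haveI : Module.Finite Rp Mp :=
    Module.Finite.of_isLocalizedModule S (LocalizedModule.mkLinearMap S M)
  have hco : IsCoatomic (Submodule Rp Mp) :=
    CompleteLattice.coatomic_of_top_compact
      ((Submodule.fg_iff_compact _).mp Module.Finite.fg_top)
  obtain ⟨W, hW, -⟩ := (hco.eq_top_or_exists_le_coatom (⊥ : Submodule Rp Mp)).resolve_left
    (by
      intro h
      have : (⊤ : Submodule Rp Mp) = ⊥ := h.symm
      obtain ⟨a, b, hab⟩ := hMp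
      exact hab (by
        have ha : a ∈ (⊥ : Submodule Rp Mp) := this ▸ Submodule.mem_top
        have hb : b ∈ (⊥ : Submodule Rp Mp) := this ▸ Submodule.mem_top
        rw [Submodule.mem_bot] at ha hb
        rw [ha, hb]))
  -- pick `v ∉ W`
  obtain ⟨v, -, hv⟩ := SetLike.exists_of_lt (lt_top_iff_ne_top.mpr hW.1)
  -- the map `Rp → Mp/W`, `r ↦ r•v mod W`, is surjective with maximal kernel
  set f1 : Rp →ₗ[Rp] Mp ⧸ W := W.mkQ ∘ₗ LinearMap.toSpanSingleton Rp Mp v with hf1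
  have key : ∀ m : Mp, m ∉ W → W ⊔ Submodule.span Rp {m} = ⊤ := by
    intro m hm
    refine hW.2 _ (lt_of_le_of_ne le_sup_left ?_)
    intro h
    exact hm (h ▸ Submodule.mem_sup_right (Submodule.mem_span_singleton_self m))
  have hsurj : Function.Surjective f1 := by
    intro y
    obtain ⟨m, rfl⟩ := W.mkQ_surjective y
    have : m ∈ W ⊔ Submodule.span Rp {v} := by rw [key v hv]; trivial
    obtain ⟨w, hw, z, hz, rfl⟩ := Submodule.mem_sup.mp this
    obtain ⟨r, rfl⟩ := Submodule.mem_span_singleton.mp hz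
    refine ⟨r, ?_⟩
    show W.mkQ (r • v) = W.mkQ (w + r • v)
    rw [map_add, show W.mkQ w = 0 from (Submodule.Quotient.mk_eq_zero W).mpr hw, zero_add]
  have hmemJ : ∀ r : Rp, r ∈ LinearMap.ker f1 ↔ r • v ∈ W := by
    intro r
    simp only [hf1, LinearMap.mem_ker, LinearMap.comp_apply,
      LinearMap.toSpanSingleton_apply, Submodule.mkQ_apply, Submodule.Quotient.mk_eq_zero]
  have hJmax : Ideal.IsMaximal (LinearMap.ker f1 : Ideal Rp) := by
    rw [Ideal.isMaximal_iff]
    constructor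
    · intro h1
      exact hv (by simpa using (hmemJ 1).mp h1)
    · intro I r hJI hr hrI
      have hrv : r • v ∉ W := fun h => hr ((hmemJ r).mpr h)
      have : v ∈ W ⊔ Submodule.span Rp {r • v} := by rw [key _ hrv]; trivial
      obtain ⟨w, hw, z, hz, hvw⟩ := Submodule.mem_sup.mp this
      obtain ⟨c, rfl⟩ := Submodule.mem_span_singleton.mp hz
      have h2 : (1 - c * r) • v = w := by
        rw [sub_smul, one_smul, mul_smul, eq_sub_of_add_eq hvw]
      have h1 : (1 - c * r) ∈ LinearMap.ker f1 := (hmemJ _).mpr (h2 ▸ hw)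
      have : (1 : Rp) = (1 - c * r) + c * r := by ring
      rw [this]
      exact I.add_mem (hJI h1) (I.mul_mem_left c hrI)
  have hJm : (LinearMap.ker f1 : Ideal Rp) = IsLocalRing.maximalIdeal Rp :=
    IsLocalRing.eq_maximalIdeal hJmax
  -- the kernel annihilates `xp`
  have hle : (LinearMap.ker f1 : Ideal Rp) ≤
      LinearMap.ker (LinearMap.toSpanSingleton Rp Np xp) := by
    rw [hJm, ← Localization.AtPrime.map_eq_maximalIdeal]
    rw [Ideal.map_le_iff_le_comap]
    intro a ha
    simp only [Ideal.mem_comap, LinearMap.mem_ker, LinearMap.toSpanSingleton_apply]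
    show (algebraMap R (Localization.AtPrime p)) a • xp = 0
    rw [algebraMap_smul, hxpdef, LocalizedModule.smul'_mk, (hxr a).mpr ha,
      LocalizedModule.zero_mk]
  set ψ : (Rp ⧸ (LinearMap.ker f1 : Ideal Rp)) →ₗ[Rp] Np :=
    Submodule.liftQ _ (LinearMap.toSpanSingleton Rp Np xp) hle with hψ
  set e := f1.quotKerEquivOfSurjective hsurj with he
  set g : Mp →ₗ[Rp] Np := ψ ∘ₗ (e.symm : Mp ⧸ W →ₗ[Rp] _) ∘ₗ W.mkQ with hg
  -- all `R`-linear maps `M → N` vanish, hence so do their localizations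
  haveI : Module.FinitePresentation R M := Module.finitePresentation_of_finite R M
  obtain ⟨⟨f0, s⟩, hf0⟩ := IsLocalizedModule.mk'_surjective S
    (LocalizedModule.map S (M := M) (N := N)) g
  have hg0 : g = 0 := by
    rw [← hf0, hcon f0]
    exact IsLocalizedModule.mk'_zero _ _
  -- but `g` is nonzero: it hits `xp`
  have hψ0 : ∀ z, ψ z = 0 := by
    intro z
    obtain ⟨m, hm⟩ := W.mkQ_surjective (e z)
    have hgm : g m = 0 := by rw [hg0]; rfl
    rw [hg] at hgm
    simp only [LinearMap.comp_apply, Submodule.mkQ_apply] at hgm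
    rw [Submodule.mkQ_apply] at hm
    rw [hm] at hgm
    simp only [LinearEquiv.coe_coe, LinearEquiv.symm_apply_apply] at hgm
    exact hgm
  have : xp = 0 := by
    have := hψ0 (Submodule.Quotient.mk 1)
    rwa [hψ, Submodule.liftQ_apply, LinearMap.toSpanSingleton_apply, one_smul] at this
  exact hxp this
end

section
/- Let A be a locally noetherian Grothendieck category and let T be a class of objects of A closed under subobjects. Let F = {N ∈ A : Hom_A(M,N) = 0 for all M ∈ T}. Then F is closed under arbitrary coproducts: for any family (N_i)_{i ∈ I} of objects of F, the coproduct ⊕_{i ∈ I} N_i lies in F. -/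
/-!
Common set-up: Rosenberg's spectrum of an abelian category.

For objects `X Y` of an abelian category `C`, `X ≺ Y` means that `X` is a subquotient of a
finite direct sum of copies of `Y`; `X ≈ Y` means `X ≺ Y ≺ X`.  A nonzero object `P` is
*spectral* if it is `≈`-equivalent to each of its nonzero subobjects, and the spectrum
`𝔖pec(C)` is the collection of `≈`-equivalence classes `⟨P⟩` of spectral objects.
`Supp(M) = {⟨P⟩ : P ≺ M}` and `Ass(M) = {⟨P⟩ : some spectral object of class ⟨P⟩ embeds in M}`.
-/

open CategoryTheory CategoryTheory.Limits

attribute [local instance] CategoryTheory.Abelian.hasFiniteBiproducts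
attribute [local instance] CategoryTheory.Limits.hasBinaryBiproducts_of_finite_biproducts

universe v u

namespace RosenbergSpec
namespace Statement13Aux

open CategoryTheory.Limits.CoproductsFromFiniteFiltered
open scoped Classical

noncomputable section

variable {A : Type u} [Category.{v} A] [Abelian A] [HasColimits A]
variable {I : Type v} (N : I → A)

/-- The filtered diagram of finite subcoproducts of `∐ N`. -/
abbrev DD : Finset (Discrete I) ⥤ A := liftToFinsetObj (Discrete.functor N)

/-- The canonical inclusion of a finite subcoproduct into `∐ N`. -/
def uu (m : Finset (Discrete I)) : (DD N).obj m ⟶ ∐ N :=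
  colimit.ι (DD N) m ≫
    (colimit.isoColimitCocone (liftToFinsetColimitCocone (Discrete.functor N))).inv

lemma ι_uu (m : Finset (Discrete I)) (x : {x // x ∈ m}) :
    Sigma.ι (fun y : {y // y ∈ m} => (Discrete.functor N).obj y.1) x ≫ uu N m
      = Sigma.ι N x.1.as := by
  exact liftToFinsetColimIso_aux (Discrete.functor N) x

/-- A retraction of `uu`. -/
def rr (m : Finset (Discrete I)) : ∐ N ⟶ (DD N).obj m :=
  Sigma.desc fun i : I =>
    if h : (Discrete.mk i) ∈ m then
      Sigma.ι (fun y : {y // y ∈ m} => (Discrete.functor N).obj y.1)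
        (⟨Discrete.mk i, h⟩ : {y // y ∈ m})
    else 0

instance uu_mono (m : Finset (Discrete I)) : Mono (uu N m) := by
  have e : uu N m ≫ rr N m = 𝟙 _ := by
    apply Sigma.hom_ext
    intro x
    have h1 : Sigma.ι (fun y : {y // y ∈ m} => (Discrete.functor N).obj y.1) x ≫ uu N m ≫ rr N m
        = Sigma.ι N x.1.as ≫ rr N m := by
      exact (Category.assoc _ _ _).symm.trans (congrArg (· ≫ rr N m) (ι_uu N m x))
    have h2 : Sigma.ι N x.1.as ≫ rr N m
        = Sigma.ι (fun y : {y // y ∈ m} => (Discrete.functor N).obj y.1) x := by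
      rw [rr, Sigma.ι_desc]; exact dif_pos x.2
    exact h1.trans (h2.trans (Category.comp_id _).symm)
  haveI : IsSplitMono (uu N m) := IsSplitMono.mk' ⟨rr N m, e⟩
  infer_instance

/-- Colimit cocone of a constant functor on `Finset (Discrete I)`. -/
def constColimitCocone (X : A) :
    ColimitCocone ((Functor.const (Finset (Discrete I))).obj X) where
  cocone := { pt := X, ι := { app := fun _ => 𝟙 X, naturality := by intros; simp } }
  isColimit :=
    { desc := fun s => s.ι.app ⊥
      fac := fun s j => by
        have := s.ι.naturality (homOfLE (bot_le : (⊥ : Finset (Discrete I)) ≤ j))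
        simpa using this.symm
      uniq := fun s m hm => by simpa using hm ⊥ }

/-- The cocone natural transformation `DD N ⟶ const (∐ N)` with components `uu`. -/
def iotaN : DD N ⟶ (Functor.const (Finset (Discrete I))).obj (∐ N) :=
  (colimit.cocone (DD N)).ι ≫
    (Functor.const _).map
      (colimit.isoColimitCocone (liftToFinsetColimitCocone (Discrete.functor N))).inv

lemma iotaN_app (s : Finset (Discrete I)) : (iotaN N).app s = uu N s := rfl

instance : Mono (iotaN N) := by
  haveI : ∀ s, Mono ((iotaN N).app s) := fun s => inferInstanceAs (Mono (uu N s))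
  exact NatTrans.mono_of_mono_app _

variable [AB5 A]

/-- Any morphism from a noetherian object into `∐ N` factors through a finite
subcoproduct.  This uses `AB5` (exactness of filtered colimits). -/
lemma exists_factor (G : A) [IsNoetherianObject G] (h : G ⟶ ∐ N) :
    ∃ (t : Finset (Discrete I)) (k : G ⟶ (DD N).obj t), k ≫ uu N t = h := by
  set J := Finset (Discrete I)
  set eta : (Functor.const J).obj G ⟶ (Functor.const J).obj (∐ N) :=
    (Functor.const J).map h with heta
  set PP : J ⥤ A := pullback eta (iotaN N) with hPP
  set fst : PP ⟶ (Functor.const J).obj G := pullback.fst eta (iotaN N) with hfst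
  set snd : PP ⟶ DD N := pullback.snd eta (iotaN N) with hsnd
  have hcond : ∀ s : J, fst.app s ≫ h = snd.app s ≫ uu N s := by
    intro s
    have := congrArg (fun α : PP ⟶ (Functor.const J).obj (∐ N) => α.app s)
      (pullback.condition (f := eta) (g := iotaN N))
    simpa [heta, iotaN_app] using this
  haveI : ∀ s : J, Mono (fst.app s) := fun s =>
    (NatTrans.mono_iff_mono_app fst).mp inferInstance s
  -- the canonical map `colimit PP ⟶ G` is an isomorphism, by `AB5`
  have hiso1 : IsIso (colim.map (iotaN N)) := by
    have e : colim.map (iotaN N) ≫ (colimit.isoColimitCocone (constColimitCocone (∐ N))).hom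
        = (colimit.isoColimitCocone (liftToFinsetColimitCocone (Discrete.functor N))).inv := by
      apply colimit.hom_ext
      intro s
      rw [colimit.ι_map_assoc, colimit.isoColimitCocone_ι_hom]
      simp [iotaN_app, uu, constColimitCocone]
    have : colim.map (iotaN N)
        = (colimit.isoColimitCocone (liftToFinsetColimitCocone (Discrete.functor N))).inv ≫
          (colimit.isoColimitCocone (constColimitCocone (∐ N))).inv := by
      exact (Iso.eq_comp_inv _).mpr e
    rw [this]; exact IsIso.comp_isIso' (Iso.isIso_inv _) (Iso.isIso_inv _)
  have hiso2 : IsIso (colim.map fst) := by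
    have e := PreservesPullback.iso_hom_fst colim eta (iotaN N)
    haveI : IsIso (pullback.fst (colim.map eta) (colim.map (iotaN N))) := by
      haveI := hiso1
      infer_instance
    rw [← e]
    infer_instance
  set q : colimit PP ⟶ G :=
    colim.map fst ≫ (colimit.isoColimitCocone (constColimitCocone G)).hom with hq
  have hqι : ∀ s : J, colimit.ι PP s ≫ q = fst.app s := by
    intro s
    rw [hq]
    exact (colimit.ι_map_assoc _ _ _).trans ((congrArg (fst.app s ≫ ·) (colimit.isoColimitCocone_ι_hom _ _)).trans (Category.comp_id (fst.app s)))
  haveI : IsIso q := by rw [hq]; haveI := hiso2; exact IsIso.comp_isIso' hiso2 (Iso.isIso_hom _)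
  -- the subobjects of `G` obtained by pulling back the finite subcoproducts
  have hmono : ∀ {s s' : J} (hss : s ≤ s'),
      Subobject.mk (fst.app s) ≤ Subobject.mk (fst.app s') := by
    intro s s' hss
    refine Subobject.mk_le_mk_of_comm (PP.map (homOfLE hss)) ?_
    have := fst.naturality (homOfLE hss)
    simpa using this
  obtain ⟨Qt, ⟨t, hQt⟩, hmax⟩ := (wellFounded_gt (α := Subobject G)).has_min
    (Set.range fun s => Subobject.mk (fst.app s)) ⟨_, ⟨⊥, rfl⟩⟩
  have hQt' : Subobject.mk (fst.app t) = Qt := hQt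
  have hle : ∀ s : J, Subobject.mk (fst.app s) ≤ Qt := by
    intro s
    have h1 : Subobject.mk (fst.app s) ≤ Subobject.mk (fst.app (s ⊔ t)) := hmono le_sup_left
    have h2 : Qt ≤ Subobject.mk (fst.app (s ⊔ t)) := hQt' ▸ hmono le_sup_right
    have h3 : ¬ Subobject.mk (fst.app (s ⊔ t)) > Qt := hmax _ ⟨s ⊔ t, rfl⟩
    have h4 : Subobject.mk (fst.app (s ⊔ t)) = Qt := by
      rcases lt_or_eq_of_le h2 with hlt | heq
      · exact absurd hlt h3
      · exact heq.symm
    exact h4 ▸ h1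
  -- build the factoring morphism into the subobject `Qt`
  set c : Cocone PP :=
    { pt := (Qt : A)
      ι :=
        { app := fun s => (Subobject.underlyingIso (fst.app s)).inv ≫
            Subobject.ofLE (Subobject.mk (fst.app s)) Qt (hle s)
          naturality := by
            intro s s' f
            apply (cancel_mono Qt.arrow).mp
            simp only [Category.assoc, Category.comp_id, Functor.const_obj_map,
              Subobject.ofLE_arrow, Subobject.underlyingIso_arrow]
            have := fst.naturality f
            simpa using this } } with hc
  have hqw : q = colimit.desc PP c ≫ Qt.arrow := by
    apply colimit.hom_ext
    intro s
    rw [hqι s, colimit.ι_desc_assoc]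
    exact ((Category.assoc _ _ _).trans ((congrArg ((Subobject.underlyingIso (fst.app s)).inv ≫ ·) (Subobject.ofLE_arrow (hle s))).trans (Subobject.underlyingIso_arrow _))).symm
  haveI : Epi Qt.arrow := by
    haveI : Epi (colimit.desc PP c ≫ Qt.arrow) := by rw [← hqw]; infer_instance
    exact epi_of_epi (colimit.desc PP c) Qt.arrow
  haveI : IsIso Qt.arrow := isIso_of_mono_of_epi _
  haveI hmk : IsIso (Subobject.mk (fst.app t)).arrow := by rw [hQt']; infer_instance
  haveI : IsIso (fst.app t) := by
    have e : (Subobject.underlyingIso (fst.app t)).inv ≫ (Subobject.mk (fst.app t)).arrow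
        = fst.app t := Subobject.underlyingIso_arrow (fst.app t)
    exact e ▸ inferInstanceAs (IsIso ((Subobject.underlyingIso (fst.app t)).inv ≫
      (Subobject.mk (fst.app t)).arrow))
  refine ⟨t, inv (fst.app t) ≫ snd.app t, ?_⟩
  rw [Category.assoc, ← hcond t, IsIso.inv_hom_id_assoc]

/-- The projection of `∐ N` onto the `j`-th component. -/
def pj (j : I) : ∐ N ⟶ N j :=
  Sigma.desc fun i => if e : i = j then eqToHom (congrArg N e) else 0

/-- The projections of a finite subcoproduct are jointly monic. -/
lemma eq_zero_of_comp_pj_eq_zero {t : Finset (Discrete I)} {W : A} (k : W ⟶ (DD N).obj t)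
    (hk : ∀ j : I, k ≫ uu N t ≫ pj N j = 0) : k = 0 := by
  haveI : Fintype {x // x ∈ t} := FinsetCoe.fintype t
  set β := biproduct.isoCoproduct (fun x : {x // x ∈ t} => (Discrete.functor N).obj x.1) with hβ
  have key : ∀ x : {x // x ∈ t},
      β.inv ≫ biproduct.π (fun x : {x // x ∈ t} => (Discrete.functor N).obj x.1) x
        = uu N t ≫ pj N x.1.as := by
    intro x
    apply Sigma.hom_ext
    intro y
    have hL : Sigma.ι (fun y : {y // y ∈ t} => (Discrete.functor N).obj y.1) y ≫ β.inv ≫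
        biproduct.π (fun x : {x // x ∈ t} => (Discrete.functor N).obj x.1) x
        = biproduct.ι (fun x : {x // x ∈ t} => (Discrete.functor N).obj x.1) y ≫
          biproduct.π (fun x : {x // x ∈ t} => (Discrete.functor N).obj x.1) x := by
      rw [hβ, biproduct.isoCoproduct_inv, ← Category.assoc, Sigma.ι_desc]
    have hR : Sigma.ι (fun y : {y // y ∈ t} => (Discrete.functor N).obj y.1) y ≫
        uu N t ≫ pj N x.1.as = Sigma.ι N y.1.as ≫ pj N x.1.as := by
      exact (Category.assoc _ _ _).symm.trans (congrArg (· ≫ pj N x.1.as) (ι_uu N t y))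
    refine hL.trans (Eq.trans ?_ hR.symm)
    rw [biproduct.ι_π, pj, Sigma.ι_desc]
    by_cases hyx : y = x
    · subst hyx
      simp
    · rw [dif_neg hyx, dif_neg]
      intro e
      exact hyx (Subtype.ext (Discrete.ext e))
  have hkβ : k ≫ β.inv = 0 := by
    apply biproduct.hom_ext
    intro x
    exact (Category.assoc _ _ _).trans ((congrArg (k ≫ ·) (key x)).trans ((hk x.1.as).trans zero_comp.symm))
  have e : (k ≫ β.inv) ≫ β.hom = k :=
    (Category.assoc _ _ _).trans ((congrArg (k ≫ ·) β.inv_hom_id).trans (Category.comp_id k))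
  exact e.symm.trans ((congrArg (· ≫ β.hom) hkβ).trans zero_comp)

end
end Statement13Aux
end RosenbergSpec

namespace RosenbergSpec

/-- Let `A` be a locally noetherian Grothendieck category and let `T` be a
class of objects closed under subobjects.  Let `F = {N : Hom(M, N) = 0 for all M ∈ T}`.
Then `F` is closed under arbitrary coproducts. -/
theorem torsionfree_closed_under_coproducts
    (A : Type u) [Category.{v} A] [Abelian A] [HasColimits A] [AB5 A]
    (hln : LocallyNoetherian A)
    (T : Set A) (hT : ∀ (X M : A) (f : X ⟶ M), Mono f → M ∈ T → X ∈ T)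
    (I : Type v) (N : I → A)
    (hN : ∀ i : I, ∀ M ∈ T, ∀ f : M ⟶ N i, f = 0) :
    ∀ M ∈ T, ∀ f : M ⟶ ∐ N, f = 0 := by
  intro M hM f
  obtain ⟨κ, G, hsep, hnoe⟩ := hln
  apply hsep
  rintro _ ⟨i, rfl⟩ g
  rw [comp_zero]
  haveI := hnoe i
  obtain ⟨t, k, hfac⟩ := Statement13Aux.exists_factor N (G i) (g ≫ f)
  have hk : ∀ j : I, k ≫ Statement13Aux.uu N t ≫ Statement13Aux.pj N j = 0 := by
    intro j
    have h1 : f ≫ Statement13Aux.pj N j = 0 := hN j M hM _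
    rw [← Category.assoc, hfac, Category.assoc, h1, comp_zero]
  have hk0 := Statement13Aux.eq_zero_of_comp_pj_eq_zero N k hk
  rw [← hfac, hk0, zero_comp]

end RosenbergSpec
end

section
/- Let A be a locally noetherian Grothendieck category in which every nonzero object has an associated point, and let C be a full subcategory of A closed under subobjects, finite direct sums and essential extensions. Let M be a finitely generated object of A such that P ∈ C for every spectral object P admitting a monomorphism P ↪ M. Then M ∈ C. -/
/-!
Common set-up: Rosenberg's spectrum of an abelian category.

For objects `X Y` of an abelian category `C`, `X ≺ Y` means that `X` is a subquotient of a
finite direct sum of copies of `Y`; `X ≈ Y` means `X ≺ Y ≺ X`.  A nonzero object `P` is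
*spectral* if it is `≈`-equivalent to each of its nonzero subobjects, and the spectrum
`𝔖pec(C)` is the collection of `≈`-equivalence classes `⟨P⟩` of spectral objects.
`Supp(M) = {⟨P⟩ : P ≺ M}` and `Ass(M) = {⟨P⟩ : some spectral object of class ⟨P⟩ embeds in M}`.
-/

open CategoryTheory CategoryTheory.Limits

attribute [local instance] CategoryTheory.Abelian.hasFiniteBiproducts
attribute [local instance] CategoryTheory.Limits.hasBinaryBiproducts_of_finite_biproducts

universe v u

namespace RosenbergSpec

/-- Let `A` be a locally noetherian Grothendieck category in which every
nonzero object has an associated point, and let `𝒞` be a full subcategory closed under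
subobjects, finite direct sums and essential extensions.  Let `M` be a finitely generated
object such that `P ∈ 𝒞` for every spectral object `P` admitting a monomorphism `P ↪ M`.
Then `M ∈ 𝒞`. -/
theorem mem_of_spectral_subobjects_mem
    (A : Type u) [Category.{v} A] [Abelian A] [HasColimits A] [AB5 A]
    (hln : LocallyNoetherian A) (hass : HasAssociatedPoints A)
    (𝒞 : Set A)
    (hsub : ∀ (X M : A) (f : X ⟶ M), Mono f → M ∈ 𝒞 → X ∈ 𝒞)
    (hzero : ∀ Z : A, IsZero Z → Z ∈ 𝒞)
    (hsum : ∀ X Y : A, X ∈ 𝒞 → Y ∈ 𝒞 → (X ⊞ Y) ∈ 𝒞)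
    (hess : ∀ (M N : A) (f : M ⟶ N), IsEssential A f → M ∈ 𝒞 → N ∈ 𝒞)
    (M : A) (hM : IsNoetherianObject M)
    (hspec : ∀ (P : A), IsSpectral A P → ∀ f : P ⟶ M, Mono f → P ∈ 𝒞) :
    M ∈ 𝒞 := by
  classical
  -- consider subobjects of `M` whose underlying object lies in `𝒞`
  have hbot : (⊥ : Subobject M) ∈ {N : Subobject M | ((N : A)) ∈ 𝒞} :=
    hzero _ (IsZero.of_iso (isZero_zero A) Subobject.botCoeIsoZero)
  obtain ⟨N, hN, hmin⟩ :=
    (by haveI := hM; exact wellFounded_gt (α := Subobject M) : WellFounded ((· > ·) : Subobject M → Subobject M → Prop)).has_min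
      {N : Subobject M | ((N : A)) ∈ 𝒞} ⟨⊥, hbot⟩
  by_cases hE : IsEssential A N.arrow
  · exact hess _ _ N.arrow hE hN
  · exfalso
    rw [IsEssential] at hE
    push_neg at hE
    obtain ⟨K, g, hg, hK, hpb⟩ := hE inferInstance
    haveI hg' : Mono g := hg
    obtain ⟨x, P, hpt, pf, hpf⟩ := hass K hK
    haveI hpf' : Mono pf := hpf
    have hpnz : ¬ IsZero P.1 := P.2.1
    haveI hm' : Mono (pf ≫ g) := mono_comp _ _
    have hPC : P.1 ∈ 𝒞 := hspec P.1 P.2 (pf ≫ g) hm'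
    have hφ : Mono (biprod.desc N.arrow (pf ≫ g)) := by
      apply Preadditive.mono_of_cancel_zero
      intro T h hh
      have e : h = (h ≫ biprod.fst) ≫ biprod.inl + (h ≫ biprod.snd) ≫ biprod.inr := by
        rw [Category.assoc, Category.assoc, ← Preadditive.comp_add, biprod.total,
          Category.comp_id]
      have h1 : (h ≫ biprod.fst) ≫ N.arrow + (h ≫ biprod.snd) ≫ (pf ≫ g) = 0 := by
        calc (h ≫ biprod.fst) ≫ N.arrow + (h ≫ biprod.snd) ≫ (pf ≫ g)
            = ((h ≫ biprod.fst) ≫ biprod.inl + (h ≫ biprod.snd) ≫ biprod.inr) ≫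
              biprod.desc N.arrow (pf ≫ g) := by
              simp only [Preadditive.add_comp, Category.assoc, biprod.inl_desc,
                biprod.inr_desc]
          _ = h ≫ biprod.desc N.arrow (pf ≫ g) := by rw [← e]
          _ = 0 := hh
      have w : (h ≫ biprod.fst) ≫ N.arrow = (-((h ≫ biprod.snd) ≫ pf)) ≫ g := by
        rw [Preadditive.neg_comp, eq_neg_iff_add_eq_zero]
        simpa only [Category.assoc] using h1
      have hl : pullback.lift _ _ w = 0 := hpb.eq_zero_of_tgt _
      have hfst : h ≫ biprod.fst = 0 := by
        have h2 := pullback.lift_fst _ _ w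
        rw [hl, zero_comp] at h2
        exact h2.symm
      have hsnd : h ≫ biprod.snd = 0 := by
        have h2 := pullback.lift_snd _ _ w
        rw [hl, zero_comp] at h2
        have h3 : (h ≫ biprod.snd) ≫ pf = 0 := by
          have h4 := h2.symm
          rwa [neg_eq_zero] at h4
        exact zero_of_comp_mono pf h3
      refine biprod.hom_ext _ _ ?_ ?_ <;> simp [hfst, hsnd]
    haveI := hφ
    have hle : N ≤ Subobject.mk (biprod.desc N.arrow (pf ≫ g)) :=
      Subobject.le_mk_of_comm biprod.inl (by simp)
    have hne : N ≠ Subobject.mk (biprod.desc N.arrow (pf ≫ g)) := by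
      intro heq
      have hmle : Subobject.mk (pf ≫ g) ≤ N := by
        rw [heq]
        exact Subobject.mk_le_mk_of_comm biprod.inr (by simp)
      have hfac : Subobject.ofMkLE (pf ≫ g) N hmle ≫ N.arrow = pf ≫ g :=
        Subobject.ofMkLE_arrow hmle
      have hl : pullback.lift _ _ hfac = 0 := hpb.eq_zero_of_tgt _
      have h2 := pullback.lift_snd _ _ hfac
      rw [hl, zero_comp] at h2
      exact hpnz (IsZero.of_mono_eq_zero pf h2.symm)
    exact hmin _ (hsub _ _ (Subobject.underlyingIso _).hom inferInstance (hsum _ _ hN hPC))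
      (lt_of_le_of_ne hle hne)

end RosenbergSpec
end
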